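/- For every n ≥ 0 and ξ ∈ ℝ, the characteristic function E_n(ξ) = Σ_{x∈ℤ} q_n(ψ;x) e^{iξx} satisfies E_n(ξ) = |ψ₁|²[P_n¹(ξ) + P_n²(ξ)] + |ψ₂|²[Q_n¹(ξ) + Q_n²(ξ)] + 2 Re(ψ₁ ψ̄₂)[R_n¹(ξ) + R_n²(ξ)]. -/

import Mathlib

/-- The Laurent polynomial `s(z + z⁻¹)/2`. -/
noncomputable def zArg (s : ℝ) : LaurentPolynomial ℂ :=
  ((s : ℂ) / 2) • (LaurentPolynomial.T 1 + LaurentPolynomial.T (-1))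

/-- The Laurent polynomial `Tₙ(s(z + z⁻¹)/2)` (Chebyshev polynomial of the first kind). -/
noncomputable def chebTz (s : ℝ) (n : ℤ) : LaurentPolynomial ℂ :=
  Polynomial.aeval (zArg s) (Polynomial.Chebyshev.T ℂ n)

/-- The Laurent polynomial `Uₙ(s(z + z⁻¹)/2)` (Chebyshev polynomial of the second kind). -/
noncomputable def chebUz (s : ℝ) (n : ℤ) : LaurentPolynomial ℂ :=
  Polynomial.aeval (zArg s) (Polynomial.Chebyshev.U ℂ n)

/-- `p_n¹(z) = Tₙ(s(z+z⁻¹)/2) + (s/2)(z−z⁻¹) U_{n−1}(s(z+z⁻¹)/2)`. -/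
noncomputable def pn1 (s : ℝ) (n : ℕ) : LaurentPolynomial ℂ :=
  chebTz s (n : ℤ) +
    ((s : ℂ) / 2) • ((LaurentPolynomial.T 1 - LaurentPolynomial.T (-1)) * chebUz s ((n : ℤ) - 1))

/-- `p_n²(z) = t z U_{n−1}(s(z+z⁻¹)/2)`. -/
noncomputable def pn2 (s t : ℝ) (n : ℕ) : LaurentPolynomial ℂ :=
  (t : ℂ) • (LaurentPolynomial.T 1 * chebUz s ((n : ℤ) - 1))

/-- `q_n¹(z) = −t z⁻¹ U_{n−1}(s(z+z⁻¹)/2)`. -/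
noncomputable def qn1 (s t : ℝ) (n : ℕ) : LaurentPolynomial ℂ :=
  -((t : ℂ) • (LaurentPolynomial.T (-1) * chebUz s ((n : ℤ) - 1)))

/-- `q_n²(z) = Tₙ(s(z+z⁻¹)/2) − (s/2)(z−z⁻¹) U_{n−1}(s(z+z⁻¹)/2)`. -/
noncomputable def qn2 (s : ℝ) (n : ℕ) : LaurentPolynomial ℂ :=
  chebTz s (n : ℤ) -
    ((s : ℂ) / 2) • ((LaurentPolynomial.T 1 - LaurentPolynomial.T (-1)) * chebUz s ((n : ℤ) - 1))

/-- `Σ_x c_x(p)² e^{iξx}`. -/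
noncomputable def sqSum (p : LaurentPolynomial ℂ) (ξ : ℝ) : ℂ :=
  ∑' x : ℤ, (p.coeff x) ^ 2 * Complex.exp (Complex.I * ξ * x)

/-- `Σ_x c_x(p) c_x(q) e^{iξx}`. -/
noncomputable def prodSum (p q : LaurentPolynomial ℂ) (ξ : ℝ) : ℂ :=
  ∑' x : ℤ, p.coeff x * q.coeff x * Complex.exp (Complex.I * ξ * x)

namespace QWaux

open LaurentPolynomial

lemma coeff_T_mul (n : ℤ) (f : LaurentPolynomial ℂ) (x : ℤ) :
    ((LaurentPolynomial.T n * f : LaurentPolynomial ℂ)).coeff x = f.coeff (x - n) := by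
  rw [LaurentPolynomial.T_mul n f]
  calc ((f * LaurentPolynomial.T n : LaurentPolynomial ℂ)).coeff x = f.coeff (x - n) * 1 :=
        AddMonoidAlgebra.coeff_mul_single_apply f 1 n x
    _ = f.coeff (x - n) := mul_one _

lemma coeff_smul (c : ℂ) (f : LaurentPolynomial ℂ) (x : ℤ) : (c • f).coeff x = c * f.coeff x := rfl

lemma coeff_add (f g : LaurentPolynomial ℂ) (x : ℤ) : (f + g).coeff x = f.coeff x + g.coeff x := rfl

lemma coeff_one (x : ℤ) : (1 : LaurentPolynomial ℂ).coeff x = if x = 0 then 1 else 0 := by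
  rw [← LaurentPolynomial.T_zero, LaurentPolynomial.T_apply]
  simp [eq_comm]

lemma chebTz_rec (s : ℝ) (n : ℤ) :
    chebTz s (n + 1) = zArg s * chebTz s n - (1 - zArg s ^ 2) * chebUz s (n - 1) := by
  have h := Polynomial.Chebyshev.T_eq_X_mul_T_sub_pol_U ℂ (n - 1)
  rw [show n - 1 + 2 = n + 1 by ring, show n - 1 + 1 = n by ring] at h
  simp only [chebTz, chebUz, h, map_sub, map_mul, map_one, map_pow, Polynomial.aeval_X]

lemma chebUz_rec (s : ℝ) (n : ℤ) :
    chebUz s n = zArg s * chebUz s (n - 1) + chebTz s n := by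
  have h := Polynomial.Chebyshev.U_eq_X_mul_U_add_T ℂ (n - 1)
  rw [show n - 1 + 1 = n by ring] at h
  simp only [chebTz, chebUz, h, map_add, map_mul, Polynomial.aeval_X]

lemma T_one_mul_T_neg_one : (LaurentPolynomial.T 1 : LaurentPolynomial ℂ) * T (-1) = 1 := by
  rw [← LaurentPolynomial.T_add]; norm_num

lemma cast_st (s t : ℝ) (hst : s ^ 2 + t ^ 2 = 1) : (s:ℂ)^2 + (t:ℂ)^2 = 1 := by
  exact_mod_cast congrArg (Complex.ofReal) hst

lemma rec1 (s t : ℝ) (hst : s ^ 2 + t ^ 2 = 1) (n : ℕ) :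
    pn1 s (n + 1) = (s:ℂ) • (LaurentPolynomial.T 1 * pn1 s n)
      - (t:ℂ) • (LaurentPolynomial.T (-1) * pn2 s t n) := by
  have hab := cast_st s t hst
  have hzw := T_one_mul_T_neg_one
  simp only [pn1, pn2, Nat.cast_add, Nat.cast_one, add_sub_cancel_right, chebTz_rec s (n:ℤ),
    chebUz_rec s (n:ℤ), zArg, Algebra.smul_def]
  set z := (LaurentPolynomial.T 1 : LaurentPolynomial ℂ)
  set w := (LaurentPolynomial.T (-1) : LaurentPolynomial ℂ)
  set A := chebTz s (n:ℤ)
  set B := chebUz s ((n:ℤ) - 1)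
  set a := algebraMap ℂ (LaurentPolynomial ℂ) (s:ℂ)
  set b := algebraMap ℂ (LaurentPolynomial ℂ) (t:ℂ)
  set c := algebraMap ℂ (LaurentPolynomial ℂ) ((s:ℂ)/2)
  have hab' : a ^ 2 + b ^ 2 = 1 := by
    simp only [a, b, ← map_pow, ← map_add, hab, map_one]
  have hs : a = 2 * c := by
    show algebraMap ℂ (LaurentPolynomial ℂ) (s:ℂ) = 2 * algebraMap ℂ (LaurentPolynomial ℂ) ((s:ℂ)/2)
    rw [show ((2:LaurentPolynomial ℂ)) = algebraMap ℂ (LaurentPolynomial ℂ) 2 from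
      (map_ofNat _ 2).symm, ← map_mul]
    congr 1
    ring
  linear_combination (-(A*z) + B*(-(z*w)*(a+2*c) + c*(z*w - z^2))) * hs + (B*z*w) * hab' + B * hzw

lemma rec2 (s t : ℝ) (n : ℕ) :
    pn2 s t (n + 1) = (t:ℂ) • (LaurentPolynomial.T 1 * pn1 s n)
      + (s:ℂ) • (LaurentPolynomial.T (-1) * pn2 s t n) := by
  simp only [pn1, pn2, Nat.cast_add, Nat.cast_one, add_sub_cancel_right,
    chebUz_rec s (n:ℤ), zArg, Algebra.smul_def]
  set z := (LaurentPolynomial.T 1 : LaurentPolynomial ℂ)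
  set w := (LaurentPolynomial.T (-1) : LaurentPolynomial ℂ)
  set B := chebUz s ((n:ℤ) - 1)
  set a := algebraMap ℂ (LaurentPolynomial ℂ) (s:ℂ)
  set b := algebraMap ℂ (LaurentPolynomial ℂ) (t:ℂ)
  set c := algebraMap ℂ (LaurentPolynomial ℂ) ((s:ℂ)/2)
  have hs : a = 2 * c := by
    show algebraMap ℂ (LaurentPolynomial ℂ) (s:ℂ) = 2 * algebraMap ℂ (LaurentPolynomial ℂ) ((s:ℂ)/2)
    rw [show ((2:LaurentPolynomial ℂ)) = algebraMap ℂ (LaurentPolynomial ℂ) 2 from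
      (map_ofNat _ 2).symm, ← map_mul]
    congr 1
    ring
  linear_combination (-(b*z*w*B)) * hs

lemma rec3 (s t : ℝ) (n : ℕ) :
    qn1 s t (n + 1) = (s:ℂ) • (LaurentPolynomial.T 1 * qn1 s t n)
      - (t:ℂ) • (LaurentPolynomial.T (-1) * qn2 s n) := by
  simp only [qn1, qn2, Nat.cast_add, Nat.cast_one, add_sub_cancel_right,
    chebUz_rec s (n:ℤ), zArg, Algebra.smul_def, mul_neg, smul_neg]
  set z := (LaurentPolynomial.T 1 : LaurentPolynomial ℂ)
  set w := (LaurentPolynomial.T (-1) : LaurentPolynomial ℂ)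
  set B := chebUz s ((n:ℤ) - 1)
  set a := algebraMap ℂ (LaurentPolynomial ℂ) (s:ℂ)
  set b := algebraMap ℂ (LaurentPolynomial ℂ) (t:ℂ)
  set c := algebraMap ℂ (LaurentPolynomial ℂ) ((s:ℂ)/2)
  have hs : a = 2 * c := by
    show algebraMap ℂ (LaurentPolynomial ℂ) (s:ℂ) = 2 * algebraMap ℂ (LaurentPolynomial ℂ) ((s:ℂ)/2)
    rw [show ((2:LaurentPolynomial ℂ)) = algebraMap ℂ (LaurentPolynomial ℂ) 2 from
      (map_ofNat _ 2).symm, ← map_mul]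
    congr 1
    ring
  linear_combination (b*w*z*B) * hs

lemma rec4 (s t : ℝ) (hst : s ^ 2 + t ^ 2 = 1) (n : ℕ) :
    qn2 s (n + 1) = (t:ℂ) • (LaurentPolynomial.T 1 * qn1 s t n)
      + (s:ℂ) • (LaurentPolynomial.T (-1) * qn2 s n) := by
  have hab := cast_st s t hst
  have hzw := T_one_mul_T_neg_one
  simp only [qn1, qn2, Nat.cast_add, Nat.cast_one, add_sub_cancel_right, chebTz_rec s (n:ℤ),
    chebUz_rec s (n:ℤ), zArg, Algebra.smul_def, mul_neg, smul_neg]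
  set z := (LaurentPolynomial.T 1 : LaurentPolynomial ℂ)
  set w := (LaurentPolynomial.T (-1) : LaurentPolynomial ℂ)
  set A := chebTz s (n:ℤ)
  set B := chebUz s ((n:ℤ) - 1)
  set a := algebraMap ℂ (LaurentPolynomial ℂ) (s:ℂ)
  set b := algebraMap ℂ (LaurentPolynomial ℂ) (t:ℂ)
  set c := algebraMap ℂ (LaurentPolynomial ℂ) ((s:ℂ)/2)
  have hab' : a ^ 2 + b ^ 2 = 1 := by
    simp only [a, b, ← map_pow, ← map_add, hab, map_one]
  have hs : a = 2 * c := by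
    show algebraMap ℂ (LaurentPolynomial ℂ) (s:ℂ) = 2 * algebraMap ℂ (LaurentPolynomial ℂ) ((s:ℂ)/2)
    rw [show ((2:LaurentPolynomial ℂ)) = algebraMap ℂ (LaurentPolynomial ℂ) 2 from
      (map_ofNat _ 2).symm, ← map_mul]
    congr 1
    ring
  linear_combination (-(A*w) + B*(-(z*w)*(a+2*c) + c*(z*w - w^2))) * hs + (B*z*w) * hab' + B * hzw

lemma pn1_zero (s : ℝ) : pn1 s 0 = 1 := by
  simp [pn1, chebTz, chebUz, Polynomial.Chebyshev.U_neg_one]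

lemma pn2_zero (s t : ℝ) : pn2 s t 0 = 0 := by
  simp [pn2, chebUz, Polynomial.Chebyshev.U_neg_one]

lemma qn1_zero (s t : ℝ) : qn1 s t 0 = 0 := by
  simp [qn1, chebUz, Polynomial.Chebyshev.U_neg_one]

lemma qn2_zero (s : ℝ) : qn2 s 0 = 1 := by
  simp [qn2, chebTz, chebUz, Polynomial.Chebyshev.U_neg_one]


lemma coeff_sub (f g : LaurentPolynomial ℂ) (x : ℤ) :
    ((f - g : LaurentPolynomial ℂ)).coeff x = f.coeff x - g.coeff x := rfl

lemma coeff_zero (x : ℤ) : (0 : LaurentPolynomial ℂ).coeff x = 0 := rfl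

lemma crec1 (s t : ℝ) (hst : s ^ 2 + t ^ 2 = 1) (n : ℕ) (x : ℤ) :
    (pn1 s (n + 1)).coeff x = (s:ℂ) * (pn1 s n).coeff (x - 1) - (t:ℂ) * (pn2 s t n).coeff (x + 1) := by
  rw [rec1 s t hst n, coeff_sub, coeff_smul, coeff_smul, coeff_T_mul, coeff_T_mul,
    sub_neg_eq_add]

lemma crec2 (s t : ℝ) (n : ℕ) (x : ℤ) :
    (pn2 s t (n + 1)).coeff x = (t:ℂ) * (pn1 s n).coeff (x - 1) + (s:ℂ) * (pn2 s t n).coeff (x + 1) := by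
  rw [rec2 s t n, coeff_add, coeff_smul, coeff_smul, coeff_T_mul, coeff_T_mul,
    sub_neg_eq_add]

lemma crec3 (s t : ℝ) (n : ℕ) (x : ℤ) :
    (qn1 s t (n + 1)).coeff x = (s:ℂ) * (qn1 s t n).coeff (x - 1) - (t:ℂ) * (qn2 s n).coeff (x + 1) := by
  rw [rec3 s t n, coeff_sub, coeff_smul, coeff_smul, coeff_T_mul, coeff_T_mul,
    sub_neg_eq_add]

lemma crec4 (s t : ℝ) (hst : s ^ 2 + t ^ 2 = 1) (n : ℕ) (x : ℤ) :
    (qn2 s (n + 1)).coeff x = (t:ℂ) * (qn1 s t n).coeff (x - 1) + (s:ℂ) * (qn2 s n).coeff (x + 1) := by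
  rw [rec4 s t hst n, coeff_add, coeff_smul, coeff_smul, coeff_T_mul, coeff_T_mul,
    sub_neg_eq_add]

lemma coeffs_real (s t : ℝ) (hst : s ^ 2 + t ^ 2 = 1) (n : ℕ) : ∀ x : ℤ,
    (starRingEnd ℂ) ((pn1 s n).coeff x) = (pn1 s n).coeff x ∧ (starRingEnd ℂ) ((pn2 s t n).coeff x) = (pn2 s t n).coeff x ∧
    (starRingEnd ℂ) ((qn1 s t n).coeff x) = (qn1 s t n).coeff x ∧ (starRingEnd ℂ) ((qn2 s n).coeff x) = (qn2 s n).coeff x := by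
  induction n with
  | zero =>
    intro x
    rw [pn1_zero, pn2_zero, qn1_zero, qn2_zero, coeff_one, coeff_zero]
    split_ifs <;> simp
  | succ n ih =>
    intro x
    rw [crec1 s t hst, crec2 s t, crec3 s t, crec4 s t hst]
    obtain ⟨h1, h2, h3, h4⟩ := ih (x - 1)
    obtain ⟨g1, g2, g3, g4⟩ := ih (x + 1)
    simp only [map_sub, map_add, map_mul, Complex.conj_ofReal, h1, h2, h3, h4, g1, g2, g3, g4,
      and_self]

end QWaux
namespace QWaux

lemma key (ψ₁ ψ₂ a b c d : ℂ)
    (ha : (starRingEnd ℂ) a = a) (hb : (starRingEnd ℂ) b = b)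
    (hc : (starRingEnd ℂ) c = c) (hd : (starRingEnd ℂ) d = d) :
    ((‖ψ₁ * a + ψ₂ * c‖ ^ 2 + ‖ψ₁ * b + ψ₂ * d‖ ^ 2 : ℝ) : ℂ) =
      ((‖ψ₁‖ ^ 2 : ℝ) : ℂ) * (a ^ 2 + b ^ 2) + ((‖ψ₂‖ ^ 2 : ℝ) : ℂ) * (c ^ 2 + d ^ 2) +
      ((2 * (ψ₁ * (starRingEnd ℂ) ψ₂).re : ℝ) : ℂ) * (a * c + b * d) := by
  have hn : ∀ z : ℂ, ((‖z‖ ^ 2 : ℝ) : ℂ) = z * (starRingEnd ℂ) z := fun z => by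
    rw [Complex.mul_conj, Complex.normSq_eq_norm_sq]
  have hre : ((2 * (ψ₁ * (starRingEnd ℂ) ψ₂).re : ℝ) : ℂ) =
      ψ₁ * (starRingEnd ℂ) ψ₂ + (starRingEnd ℂ) ψ₁ * ψ₂ := by
    rw [← Complex.add_conj, map_mul, Complex.conj_conj]
  rw [Complex.ofReal_add, hn, hn, hn, hn, hre]
  simp only [map_add, map_mul, ha, hb, hc, hd]
  ring

end QWaux

open ContinuousLinearMap

set_option maxHeartbeats 4000000 in
/-- The characteristic function `E_n(ξ) = Σ_x q_n(ψ;x) e^{iξx}` equals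
`|ψ₁|²[P_n¹ + P_n²] + |ψ₂|²[Q_n¹ + Q_n²] + 2Re(ψ₁ψ̄₂)[R_n¹ + R_n²]`. -/
theorem qw_characteristic_function
    {H : Type*} [NormedAddCommGroup H] [InnerProductSpace ℂ H] [CompleteSpace H]
    (V W σ X Y T Pp Pm ε : H →L[ℂ] H)
    (hVu : adjoint V ∘L V = 1 ∧ V ∘L adjoint V = 1)
    (hWu : adjoint W ∘L W = 1 ∧ W ∘L adjoint W = 1)
    (hσu : adjoint σ ∘L σ = 1 ∧ σ ∘L adjoint σ = 1)
    (hQW1 : W ∘L W = -1)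
    (hQW2 : V ∘L W = W ∘L adjoint V)
    (hQW3W : σ ∘L W + W ∘L σ = 0)
    (hQW3V : σ ∘L V - V ∘L σ = 0)
    (hQW4 : adjoint σ = σ)
    (hX : X = (2 : ℂ)⁻¹ • (V + adjoint V))
    (hY : Y = (2 * Complex.I)⁻¹ • (V - adjoint V))
    (hT : T = X + Complex.I • (σ ∘L Y))
    (hPp : Pp = (2 : ℂ)⁻¹ • (1 + σ))
    (hPm : Pm = (2 : ℂ)⁻¹ • (1 - σ))
    (hε : ε = V ∘L W)
    (e : H) (he : ‖e‖ = 1) (hePp : Pp e = e)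
    (horth : ∀ m : ℕ, 0 < m → (inner ℂ ((V ^ m) e) e : ℂ) = 0)
    (Tu : (H →L[ℂ] H)ˣ) (hTu : (Tu : H →L[ℂ] H) = T)
    (e1 e2 : ℤ → H)
    (he1 : ∀ x : ℤ, e1 x = ((Tu ^ x : (H →L[ℂ] H)ˣ) : H →L[ℂ] H) e)
    (he2 : ∀ x : ℤ, e2 x = ((Tu ^ x : (H →L[ℂ] H)ˣ) : H →L[ℂ] H) (ε e))
    (s t : ℝ) (hs0 : 0 < s) (hs1 : s < 1) (ht0 : 0 < t) (ht1 : t < 1)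
    (hst : s ^ 2 + t ^ 2 = 1)
    (U : H →L[ℂ] H) (hU : U = (s : ℂ) • V + (t : ℂ) • W)
    (ψ₁ ψ₂ : ℂ) (hψ : ‖ψ₁‖ ^ 2 + ‖ψ₂‖ ^ 2 = 1)
    (Ψ : H) (hΨ : Ψ = ψ₁ • e1 0 + ψ₂ • e2 0)
    (q : ℕ → ℤ → ℝ)
    (hq : ∀ n x, q n x =
      ‖(inner ℂ (e1 x) ((U ^ n) Ψ) : ℂ)‖ ^ 2 + ‖(inner ℂ (e2 x) ((U ^ n) Ψ) : ℂ)‖ ^ 2) :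
    ∀ (n : ℕ) (ξ : ℝ),
      (∑' x : ℤ, ((q n x : ℝ) : ℂ) * Complex.exp (Complex.I * ξ * x)) =
        ((‖ψ₁‖ ^ 2 : ℝ) : ℂ) * (sqSum (pn1 s n) ξ + sqSum (pn2 s t n) ξ) +
          ((‖ψ₂‖ ^ 2 : ℝ) : ℂ) * (sqSum (qn1 s t n) ξ + sqSum (qn2 s n) ξ) +
          ((2 * (ψ₁ * (starRingEnd ℂ) ψ₂).re : ℝ) : ℂ) *
            (prodSum (pn1 s n) (qn1 s t n) ξ + prodSum (pn2 s t n) (qn2 s n) ξ) := by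
  obtain ⟨hV1, hV2⟩ := hVu
  obtain ⟨hW1, hW2⟩ := hWu
  -- pointwise basics
  have hV'V : ∀ u, adjoint V (V u) = u := fun u => by
    simpa using ContinuousLinearMap.ext_iff.mp hV1 u
  have hVV' : ∀ u, V (adjoint V u) = u := fun u => by
    simpa using ContinuousLinearMap.ext_iff.mp hV2 u
  have hW'W : ∀ u, adjoint W (W u) = u := fun u => by
    simpa using ContinuousLinearMap.ext_iff.mp hW1 u
  have hWW : ∀ u, W (W u) = -u := fun u => by
    simpa using ContinuousLinearMap.ext_iff.mp hQW1 u
  have hWadj : ∀ u, adjoint W u = -(W u) := fun u => by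
    have h1 : W (W (-u)) = u := by rw [hWW]; simp
    calc adjoint W u = adjoint W (W (W (-u))) := by rw [h1]
      _ = W (-u) := hW'W _
      _ = -(W u) := map_neg W u
  have hVWu : ∀ u, V (W u) = W (adjoint V u) := fun u => by
    simpa using ContinuousLinearMap.ext_iff.mp hQW2 u
  have hWVu : ∀ u, W (V u) = adjoint V (W u) := fun u => by
    have h1 : V (W (V u)) = W u := by rw [hVWu (V u), hV'V u]
    calc W (V u) = adjoint V (V (W (V u))) := (hV'V _).symm
      _ = adjoint V (W u) := by rw [h1]
  have hWV'u : ∀ u, W (adjoint V u) = V (W u) := fun u => (hVWu u).symm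
  have hσVop : σ ∘L V = V ∘L σ := sub_eq_zero.mp hQW3V
  have hσVu : ∀ u, σ (V u) = V (σ u) := fun u => by
    simpa using ContinuousLinearMap.ext_iff.mp hσVop u
  have hσV'op : adjoint V ∘L σ = σ ∘L adjoint V := by
    have h : adjoint (σ ∘L V) = adjoint (V ∘L σ) := by rw [hσVop]
    rw [adjoint_comp, adjoint_comp, hQW4] at h
    exact h
  have hσV'u : ∀ u, σ (adjoint V u) = adjoint V (σ u) := fun u => by
    simpa using (ContinuousLinearMap.ext_iff.mp hσV'op u).symm
  have hσWop : σ ∘L W = -(W ∘L σ) := eq_neg_of_add_eq_zero_left hQW3W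
  have hσWu : ∀ u, σ (W u) = -(W (σ u)) := fun u => by
    simpa using ContinuousLinearMap.ext_iff.mp hσWop u
  have hσe : σ e = e := by
    have h := hePp
    rw [hPp] at h
    simp only [ContinuousLinearMap.smul_apply, ContinuousLinearMap.add_apply,
      ContinuousLinearMap.one_apply] at h
    have h' : (2 : ℂ) • ((2 : ℂ)⁻¹ • (e + σ e)) = (2 : ℂ) • e := by rw [h]
    rw [smul_smul] at h'
    norm_num at h'
    have h'' : e + σ e = e + e := by rw [h']; rw [two_smul]
    exact add_left_cancel h''
  -- T action on eigenvectors
  have hTp : ∀ u, σ u = u → T u = V u := by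
    intro u hu
    have h1 : σ (V u) = V u := by rw [hσVu, hu]
    have h2 : σ (adjoint V u) = adjoint V u := by rw [hσV'u, hu]
    have hI : Complex.I * (2 * Complex.I)⁻¹ = (2 : ℂ)⁻¹ := by
      field_simp
    rw [hT, hX, hY]
    simp only [ContinuousLinearMap.add_apply, ContinuousLinearMap.smul_apply,
      ContinuousLinearMap.coe_comp', Function.comp_apply, ContinuousLinearMap.sub_apply]
    rw [map_smul, map_sub, h1, h2, smul_smul, hI]
    module
  have hTm : ∀ u, σ u = -u → T u = adjoint V u := by
    intro u hu
    have h1 : σ (V u) = -(V u) := by rw [hσVu, hu, map_neg]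
    have h2 : σ (adjoint V u) = -(adjoint V u) := by rw [hσV'u, hu, map_neg]
    have hI : Complex.I * (2 * Complex.I)⁻¹ = (2 : ℂ)⁻¹ := by
      field_simp
    rw [hT, hX, hY]
    simp only [ContinuousLinearMap.add_apply, ContinuousLinearMap.smul_apply,
      ContinuousLinearMap.coe_comp', Function.comp_apply, ContinuousLinearMap.sub_apply]
    rw [map_smul, map_sub, h1, h2, smul_smul, hI]
    module
  -- inverse of Tu
  have hTuinv : ∀ u, ((Tu⁻¹ : (H →L[ℂ] H)ˣ) : H →L[ℂ] H) (T u) = u := fun u => by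
    have h : ((Tu⁻¹ * Tu : (H →L[ℂ] H)ˣ) : H →L[ℂ] H) u = u := by
      rw [inv_mul_cancel]
      simp
    rwa [Units.val_mul, ContinuousLinearMap.mul_apply, hTu] at h
  have hTinvp : ∀ u, σ u = u → ((Tu⁻¹ : (H →L[ℂ] H)ˣ) : H →L[ℂ] H) u = adjoint V u := by
    intro u hu
    have h2 : σ (adjoint V u) = adjoint V u := by rw [hσV'u, hu]
    have h3 : T (adjoint V u) = u := by rw [hTp _ h2, hVV']
    calc ((Tu⁻¹ : (H →L[ℂ] H)ˣ) : H →L[ℂ] H) u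
        = ((Tu⁻¹ : (H →L[ℂ] H)ˣ) : H →L[ℂ] H) (T (adjoint V u)) := by rw [h3]
      _ = adjoint V u := hTuinv _
  have hTinvm : ∀ u, σ u = -u → ((Tu⁻¹ : (H →L[ℂ] H)ˣ) : H →L[ℂ] H) u = V u := by
    intro u hu
    have h2 : σ (V u) = -(V u) := by rw [hσVu, hu, map_neg]
    have h3 : T (V u) = u := by rw [hTm _ h2, hV'V]
    calc ((Tu⁻¹ : (H →L[ℂ] H)ˣ) : H →L[ℂ] H) u
        = ((Tu⁻¹ : (H →L[ℂ] H)ˣ) : H →L[ℂ] H) (T (V u)) := by rw [h3]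
      _ = V u := hTuinv _
  -- steps
  have hstep_up1 : ∀ x : ℤ, e1 (x + 1) = T (e1 x) := by
    intro x
    rw [he1, he1, show (x + 1 : ℤ) = 1 + x by ring, zpow_add, zpow_one, Units.val_mul,
      ContinuousLinearMap.mul_apply, hTu]
  have hstep_up2 : ∀ x : ℤ, e2 (x + 1) = T (e2 x) := by
    intro x
    rw [he2, he2, show (x + 1 : ℤ) = 1 + x by ring, zpow_add, zpow_one, Units.val_mul,
      ContinuousLinearMap.mul_apply, hTu]
  have hstep_dn1 : ∀ x : ℤ, e1 (x - 1) = ((Tu⁻¹ : (H →L[ℂ] H)ˣ) : H →L[ℂ] H) (e1 x) := by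
    intro x
    rw [he1, he1, show (x - 1 : ℤ) = -1 + x by ring, zpow_add, zpow_neg_one, Units.val_mul,
      ContinuousLinearMap.mul_apply]
  have hstep_dn2 : ∀ x : ℤ, e2 (x - 1) = ((Tu⁻¹ : (H →L[ℂ] H)ˣ) : H →L[ℂ] H) (e2 x) := by
    intro x
    rw [he2, he2, show (x - 1 : ℤ) = -1 + x by ring, zpow_add, zpow_neg_one, Units.val_mul,
      ContinuousLinearMap.mul_apply]
  have he10 : e1 0 = e := by rw [he1, zpow_zero, Units.val_one, ContinuousLinearMap.one_apply]
  have he20 : e2 0 = V (W e) := by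
    rw [he2, zpow_zero, Units.val_one, ContinuousLinearMap.one_apply, hε,
      ContinuousLinearMap.coe_comp', Function.comp_apply]
  -- eigenvectors
  have heig : ∀ x : ℤ, σ (e1 x) = e1 x ∧ σ (e2 x) = -(e2 x) := by
    intro x
    induction x using Int.induction_on with
    | zero =>
      constructor
      · rw [he10]; exact hσe
      · rw [he20, hσVu, hσWu, hσe, map_neg]
    | succ k ih =>
      constructor
      · rw [hstep_up1, hTp _ ih.1, hσVu, ih.1]
      · rw [hstep_up2, hTm _ ih.2, hσV'u, ih.2, map_neg]
    | pred k ih =>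
      constructor
      · rw [show (-(k:ℤ) - 1) = (-(k:ℤ)) - 1 by ring, hstep_dn1, hTinvp _ ih.1, hσV'u, ih.1]
      · rw [show (-(k:ℤ) - 1) = (-(k:ℤ)) - 1 by ring, hstep_dn2, hTinvm _ ih.2, hσVu, ih.2,
          map_neg]
  have he1up : ∀ x : ℤ, e1 (x + 1) = V (e1 x) := fun x => by
    rw [hstep_up1, hTp _ (heig x).1]
  have he1dn : ∀ x : ℤ, e1 (x - 1) = adjoint V (e1 x) := fun x => by
    rw [hstep_dn1, hTinvp _ (heig x).1]
  have he2up : ∀ x : ℤ, e2 (x + 1) = adjoint V (e2 x) := fun x => by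
    rw [hstep_up2, hTm _ (heig x).2]
  have he2dn : ∀ x : ℤ, e2 (x - 1) = V (e2 x) := fun x => by
    rw [hstep_dn2, hTinvm _ (heig x).2]
  -- W action
  have hW12 : ∀ x : ℤ, W (e1 x) = e2 (x + 1) ∧ W (e2 x) = -(e1 (x - 1)) := by
    intro x
    induction x using Int.induction_on with
    | zero =>
      constructor
      · rw [he10, he2up 0, he20, hV'V]
      · rw [he20, he1dn 0, he10, hWVu, hWW, map_neg]
    | succ k ih =>
      constructor
      · rw [he1up k, hWVu, ih.1, ← he2up (k + 1)]
      · rw [he2up k, hWV'u, ih.2, map_neg,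
          show ((k:ℤ) + 1) - 1 = ((k:ℤ) - 1) + 1 by ring, he1up ((k:ℤ) - 1)]
    | pred k ih =>
      constructor
      · rw [show (-(k:ℤ) - 1) = (-(k:ℤ)) - 1 by ring, he1dn, hWV'u, ih.1,
          show (-(k:ℤ)) - 1 + 1 = (-(k:ℤ) + 1) - 1 by ring, he2dn]
      · rw [show (-(k:ℤ) - 1) = (-(k:ℤ)) - 1 by ring, he2dn, hWVu, ih.2, map_neg,
          show (-(k:ℤ)) - 1 - 1 = (-(k:ℤ) - 1) - 1 by ring, he1dn (-(k:ℤ) - 1)]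
  -- inner product preservation
  have hVin : ∀ u v : H, (inner ℂ (V u) (V v) : ℂ) = inner ℂ u v := by
    intro u v
    have h := ContinuousLinearMap.adjoint_inner_right V u (V v)
    rw [hV'V] at h
    exact h.symm
  have hV'in : ∀ u v : H, (inner ℂ (adjoint V u) (adjoint V v) : ℂ) = inner ℂ u v := by
    intro u v
    have h := ContinuousLinearMap.adjoint_inner_left V (adjoint V v) u
    rw [hVV'] at h
    exact h
  have hWin : ∀ u v : H, (inner ℂ (W u) (W v) : ℂ) = inner ℂ u v := by
    intro u v
    have h := ContinuousLinearMap.adjoint_inner_right W u (W v)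
    rw [hW'W] at h
    exact h.symm
  have hee : (inner ℂ e e : ℂ) = 1 := by
    rw [inner_self_eq_norm_sq_to_K, he]
    norm_num
  have horthC : ∀ m : ℕ, (inner ℂ e ((V ^ m) e) : ℂ) = if m = 0 then 1 else 0 := by
    intro m
    rcases Nat.eq_zero_or_pos m with h | h
    · subst h
      simp only [pow_zero, ContinuousLinearMap.one_apply, if_true]
      exact hee
    · rw [if_neg h.ne', ← inner_conj_symm, horth m h, map_zero]
  have hpowadj : ∀ m : ℕ, (adjoint V) ^ m = adjoint (V ^ m) := by
    intro m
    rw [← ContinuousLinearMap.star_eq_adjoint, ← ContinuousLinearMap.star_eq_adjoint, ← star_pow]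
  -- orthonormality of e1
  have he1nat : ∀ m : ℕ, e1 (m : ℤ) = (V ^ m) e := by
    intro m
    induction m with
    | zero => exact he10
    | succ m ih =>
      rw [show ((m + 1 : ℕ) : ℤ) = (m : ℤ) + 1 by push_cast; ring, he1up, ih, pow_succ',
        ContinuousLinearMap.mul_apply]
  have hinv1 : ∀ (d x : ℤ), (inner ℂ (e1 x) (e1 (x + d)) : ℂ) = inner ℂ (e1 0) (e1 d) := by
    intro d x
    induction x using Int.induction_on with
    | zero => rw [zero_add]
    | succ k ih =>
      rw [he1up k, show ((k : ℤ) + 1 + d) = ((k : ℤ) + d) + 1 by ring, he1up ((k : ℤ) + d), hVin]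
      exact ih
    | pred k ih =>
      rw [show (-(k : ℤ) - 1) = (-(k : ℤ)) - 1 by ring, he1dn,
        show (-(k : ℤ) - 1 + d) = ((-(k : ℤ)) + d) - 1 by ring, he1dn ((-(k : ℤ)) + d), hV'in]
      exact ih
  have hbase1 : ∀ d : ℤ, (inner ℂ (e1 0) (e1 d) : ℂ) = if d = 0 then 1 else 0 := by
    have hpos : ∀ m : ℕ, (inner ℂ (e1 0) (e1 (m : ℤ)) : ℂ) = if (m : ℤ) = 0 then 1 else 0 := by
      intro m
      rw [he10, he1nat, horthC]
      by_cases h : m = 0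
      · simp [h]
      · rw [if_neg h, if_neg (by exact_mod_cast h)]
    intro d
    rcases lt_trichotomy d 0 with h | h | h
    · rw [if_neg h.ne]
      have h1 : (inner ℂ (e1 d) (e1 0) : ℂ) = 0 := by
        have h2 := hinv1 (-d) d
        rw [add_neg_cancel] at h2
        rw [h2, show (-d) = (((-d).toNat : ℕ) : ℤ) by omega, hpos]
        rw [if_neg (by omega)]
      rw [← inner_conj_symm, h1, map_zero]
    · subst h
      rw [if_pos rfl, he10, hee]
    · rw [show d = (((d).toNat : ℕ) : ℤ) by omega, hpos]
  have horth1 : ∀ x y : ℤ, (inner ℂ (e1 x) (e1 y) : ℂ) = if x = y then 1 else 0 := by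
    intro x y
    have h := hinv1 (y - x) x
    rw [show x + (y - x) = y by ring] at h
    rw [h, hbase1]
    by_cases hxy : x = y
    · rw [if_pos (by omega), if_pos hxy]
    · rw [if_neg (by omega), if_neg hxy]
  -- orthonormality of e2
  have hcommV : ∀ (m : ℕ) (u : H), (V ^ m) (V u) = V ((V ^ m) u) := by
    intro m u
    rw [← ContinuousLinearMap.mul_apply, ← pow_succ, pow_succ', ContinuousLinearMap.mul_apply]
  have hVmW : ∀ (m : ℕ) (u : H), (V ^ m) (W u) = W (((adjoint V) ^ m) u) := by
    intro m
    induction m with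
    | zero => intro u; simp
    | succ m ih =>
      intro u
      rw [pow_succ', ContinuousLinearMap.mul_apply, ih, pow_succ',
        ContinuousLinearMap.mul_apply, hWV'u]
  have he2nat : ∀ m : ℕ, e2 (m : ℤ) = ((adjoint V) ^ m) (e2 0) := by
    intro m
    induction m with
    | zero => simp
    | succ m ih =>
      rw [show ((m + 1 : ℕ) : ℤ) = (m : ℤ) + 1 by push_cast; ring, he2up, ih, pow_succ',
        ContinuousLinearMap.mul_apply]
  have horthC2 : ∀ m : ℕ,
      (inner ℂ (e2 0) (((adjoint V) ^ m) (e2 0)) : ℂ) = if m = 0 then 1 else 0 := by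
    intro m
    rw [hpowadj, ContinuousLinearMap.adjoint_inner_right, he20, hcommV, hVin, hVmW, hWin,
      hpowadj, ContinuousLinearMap.adjoint_inner_left, horthC]
  have hinv2 : ∀ (d x : ℤ), (inner ℂ (e2 x) (e2 (x + d)) : ℂ) = inner ℂ (e2 0) (e2 d) := by
    intro d x
    induction x using Int.induction_on with
    | zero => rw [zero_add]
    | succ k ih =>
      rw [he2up k, show ((k : ℤ) + 1 + d) = ((k : ℤ) + d) + 1 by ring, he2up ((k : ℤ) + d),
        hV'in]
      exact ih
    | pred k ih =>
      rw [show (-(k : ℤ) - 1) = (-(k : ℤ)) - 1 by ring, he2dn,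
        show (-(k : ℤ) - 1 + d) = ((-(k : ℤ)) + d) - 1 by ring, he2dn ((-(k : ℤ)) + d), hVin]
      exact ih
  have hbase2 : ∀ d : ℤ, (inner ℂ (e2 0) (e2 d) : ℂ) = if d = 0 then 1 else 0 := by
    have hpos : ∀ m : ℕ, (inner ℂ (e2 0) (e2 (m : ℤ)) : ℂ) = if (m : ℤ) = 0 then 1 else 0 := by
      intro m
      rw [he2nat, horthC2]
      by_cases h : m = 0
      · simp [h]
      · rw [if_neg h, if_neg (by exact_mod_cast h)]
    intro d
    rcases lt_trichotomy d 0 with h | h | h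
    · rw [if_neg h.ne]
      have h1 : (inner ℂ (e2 d) (e2 0) : ℂ) = 0 := by
        have h2 := hinv2 (-d) d
        rw [add_neg_cancel] at h2
        rw [h2, show (-d) = (((-d).toNat : ℕ) : ℤ) by omega, hpos]
        rw [if_neg (by omega)]
      rw [← inner_conj_symm, h1, map_zero]
    · subst h
      rw [if_pos rfl]
      have := hpos 0
      simpa using this
    · rw [show d = (((d).toNat : ℕ) : ℤ) by omega, hpos]
  have horth2 : ∀ x y : ℤ, (inner ℂ (e2 x) (e2 y) : ℂ) = if x = y then 1 else 0 := by
    intro x y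
    have h := hinv2 (y - x) x
    rw [show x + (y - x) = y by ring] at h
    rw [h, hbase2]
    by_cases hxy : x = y
    · rw [if_pos (by omega), if_pos hxy]
    · rw [if_neg (by omega), if_neg hxy]
  -- cross orthogonality
  have horth12 : ∀ x y : ℤ, (inner ℂ (e1 x) (e2 y) : ℂ) = 0 := by
    intro x y
    have hσinner : (inner ℂ (σ (e1 x)) (e2 y) : ℂ) = inner ℂ (e1 x) (σ (e2 y)) := by
      have h := ContinuousLinearMap.adjoint_inner_left σ (e2 y) (e1 x)
      rw [hQW4] at h
      exact h
    have h : (inner ℂ (e1 x) (e2 y) : ℂ) = -(inner ℂ (e1 x) (e2 y) : ℂ) := by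
      conv_lhs => rw [← (heig x).1]
      rw [hσinner, (heig y).2, inner_neg_right]
    have h2 : (2 : ℂ) * (inner ℂ (e1 x) (e2 y) : ℂ) = 0 := by linear_combination h
    exact (mul_eq_zero.mp h2).resolve_left two_ne_zero
  have horth21 : ∀ x y : ℤ, (inner ℂ (e2 x) (e1 y) : ℂ) = 0 := by
    intro x y
    rw [← inner_conj_symm, horth12, map_zero]
  -- action of U on amplitudes
  have hA : ∀ (x : ℤ) (w : H), (inner ℂ (e1 x) (U w) : ℂ) =
      (s : ℂ) * inner ℂ (e1 (x - 1)) w - (t : ℂ) * inner ℂ (e2 (x + 1)) w := by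
    intro x w
    rw [hU]
    simp only [ContinuousLinearMap.add_apply, ContinuousLinearMap.smul_apply]
    rw [inner_add_right, inner_smul_right, inner_smul_right]
    have hv : (inner ℂ (e1 x) (V w) : ℂ) = inner ℂ (e1 (x - 1)) w := by
      rw [he1dn x]
      exact (ContinuousLinearMap.adjoint_inner_left V w (e1 x)).symm
    have hw : (inner ℂ (e1 x) (W w) : ℂ) = -(inner ℂ (e2 (x + 1)) w : ℂ) := by
      have h := ContinuousLinearMap.adjoint_inner_left W w (e1 x)
      rw [hWadj (e1 x), (hW12 x).1, inner_neg_left] at h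
      exact h.symm
    rw [hv, hw]
    ring
  have hB : ∀ (x : ℤ) (w : H), (inner ℂ (e2 x) (U w) : ℂ) =
      (s : ℂ) * inner ℂ (e2 (x + 1)) w + (t : ℂ) * inner ℂ (e1 (x - 1)) w := by
    intro x w
    rw [hU]
    simp only [ContinuousLinearMap.add_apply, ContinuousLinearMap.smul_apply]
    rw [inner_add_right, inner_smul_right, inner_smul_right]
    have hv : (inner ℂ (e2 x) (V w) : ℂ) = inner ℂ (e2 (x + 1)) w := by
      rw [he2up x]
      exact (ContinuousLinearMap.adjoint_inner_left V w (e2 x)).symm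
    have hw : (inner ℂ (e2 x) (W w) : ℂ) = (inner ℂ (e1 (x - 1)) w : ℂ) := by
      have h := ContinuousLinearMap.adjoint_inner_left W w (e2 x)
      rw [hWadj (e2 x), (hW12 x).2, neg_neg] at h
      exact h.symm
    rw [hv, hw]
  -- main induction
  have hmain : ∀ (n : ℕ) (x : ℤ),
      (inner ℂ (e1 x) ((U ^ n) Ψ) : ℂ) = ψ₁ * (pn1 s n).coeff x + ψ₂ * (qn1 s t n).coeff x ∧
      (inner ℂ (e2 x) ((U ^ n) Ψ) : ℂ) = ψ₁ * (pn2 s t n).coeff x + ψ₂ * (qn2 s n).coeff x := by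
    intro n
    induction n with
    | zero =>
      intro x
      rw [pow_zero]
      simp only [ContinuousLinearMap.one_apply]
      rw [hΨ]
      constructor
      · rw [inner_add_right, inner_smul_right, inner_smul_right, horth1 x 0, horth12 x 0,
          QWaux.pn1_zero, QWaux.qn1_zero, QWaux.coeff_one, QWaux.coeff_zero]
      · rw [inner_add_right, inner_smul_right, inner_smul_right, horth21 x 0, horth2 x 0,
          QWaux.pn2_zero, QWaux.qn2_zero, QWaux.coeff_one, QWaux.coeff_zero]
    | succ n ih =>
      intro x
      rw [pow_succ', ContinuousLinearMap.mul_apply]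
      constructor
      · rw [hA x _, (ih (x - 1)).1, (ih (x + 1)).2, QWaux.crec1 s t hst n x,
          QWaux.crec3 s t n x]
        ring
      · rw [hB x _, (ih (x + 1)).2, (ih (x - 1)).1, QWaux.crec2 s t n x,
          QWaux.crec4 s t hst n x]
        ring
  -- final assembly
  intro n ξ
  have hreal := QWaux.coeffs_real s t hst n
  set E : ℤ → ℂ := fun x => Complex.exp (Complex.I * ξ * x) with hE
  have hpt : ∀ x : ℤ, ((q n x : ℝ) : ℂ) * E x =
      ((‖ψ₁‖ ^ 2 : ℝ) : ℂ) * ((pn1 s n).coeff x ^ 2 * E x) +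
      ((‖ψ₁‖ ^ 2 : ℝ) : ℂ) * ((pn2 s t n).coeff x ^ 2 * E x) +
      ((‖ψ₂‖ ^ 2 : ℝ) : ℂ) * ((qn1 s t n).coeff x ^ 2 * E x) +
      ((‖ψ₂‖ ^ 2 : ℝ) : ℂ) * ((qn2 s n).coeff x ^ 2 * E x) +
      ((2 * (ψ₁ * (starRingEnd ℂ) ψ₂).re : ℝ) : ℂ) * ((pn1 s n).coeff x * (qn1 s t n).coeff x * E x) +
      ((2 * (ψ₁ * (starRingEnd ℂ) ψ₂).re : ℝ) : ℂ) * ((pn2 s t n).coeff x * (qn2 s n).coeff x * E x) := by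
    intro x
    obtain ⟨h1, h2, h3, h4⟩ := hreal x
    rw [hq n x, (hmain n x).1, (hmain n x).2,
      QWaux.key ψ₁ ψ₂ ((pn1 s n).coeff x) ((pn2 s t n).coeff x) ((qn1 s t n).coeff x) ((qn2 s n).coeff x) h1 h2 h3 h4]
    ring
  have hsumm : ∀ (p r : LaurentPolynomial ℂ) (c : ℂ),
      Summable (fun x : ℤ => c * (p.coeff x * r.coeff x * E x)) := by
    intro p r c
    apply summable_of_ne_finset_zero (s := p.coeff.support)
    intro x hx
    rw [Finsupp.notMem_support_iff.mp hx]
    ring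
  have hsq : ∀ (p : LaurentPolynomial ℂ) (c : ℂ),
      Summable (fun x : ℤ => c * (p.coeff x ^ 2 * E x)) := by
    intro p c
    have := hsumm p p c
    simpa [sq] using this
  calc (∑' x : ℤ, ((q n x : ℝ) : ℂ) * E x)
      = ∑' x : ℤ, (((‖ψ₁‖ ^ 2 : ℝ) : ℂ) * ((pn1 s n).coeff x ^ 2 * E x) +
        ((‖ψ₁‖ ^ 2 : ℝ) : ℂ) * ((pn2 s t n).coeff x ^ 2 * E x) +
        ((‖ψ₂‖ ^ 2 : ℝ) : ℂ) * ((qn1 s t n).coeff x ^ 2 * E x) +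
        ((‖ψ₂‖ ^ 2 : ℝ) : ℂ) * ((qn2 s n).coeff x ^ 2 * E x) +
        ((2 * (ψ₁ * (starRingEnd ℂ) ψ₂).re : ℝ) : ℂ) * ((pn1 s n).coeff x * (qn1 s t n).coeff x * E x) +
        ((2 * (ψ₁ * (starRingEnd ℂ) ψ₂).re : ℝ) : ℂ) * ((pn2 s t n).coeff x * (qn2 s n).coeff x * E x)) :=
        tsum_congr hpt
    _ = ((‖ψ₁‖ ^ 2 : ℝ) : ℂ) * (∑' x : ℤ, (pn1 s n).coeff x ^ 2 * E x) +
        ((‖ψ₁‖ ^ 2 : ℝ) : ℂ) * (∑' x : ℤ, (pn2 s t n).coeff x ^ 2 * E x) +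
        ((‖ψ₂‖ ^ 2 : ℝ) : ℂ) * (∑' x : ℤ, (qn1 s t n).coeff x ^ 2 * E x) +
        ((‖ψ₂‖ ^ 2 : ℝ) : ℂ) * (∑' x : ℤ, (qn2 s n).coeff x ^ 2 * E x) +
        ((2 * (ψ₁ * (starRingEnd ℂ) ψ₂).re : ℝ) : ℂ) *
          (∑' x : ℤ, (pn1 s n).coeff x * (qn1 s t n).coeff x * E x) +
        ((2 * (ψ₁ * (starRingEnd ℂ) ψ₂).re : ℝ) : ℂ) *
          (∑' x : ℤ, (pn2 s t n).coeff x * (qn2 s n).coeff x * E x) := by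
        rw [Summable.tsum_add (((((hsq _ _).add (hsq _ _)).add (hsq _ _)).add (hsq _ _)).add
            (hsumm _ _ _)) (hsumm _ _ _),
          Summable.tsum_add ((((hsq _ _).add (hsq _ _)).add (hsq _ _)).add (hsq _ _)) (hsumm _ _ _),
          Summable.tsum_add (((hsq _ _).add (hsq _ _)).add (hsq _ _)) (hsq _ _),
          Summable.tsum_add ((hsq _ _).add (hsq _ _)) (hsq _ _),
          Summable.tsum_add (hsq _ _) (hsq _ _),
          tsum_mul_left, tsum_mul_left, tsum_mul_left, tsum_mul_left, tsum_mul_left,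
          tsum_mul_left]
    _ = _ := by
        rw [sqSum, sqSum, sqSum, sqSum, prodSum, prodSum]
        ring
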